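/- Let T be a commutative indecomposable Artinian ring that is SI (every singular T-module is injective). Then T is a field. (Key step: if T is local Artinian, not a field, then a minimal nonzero ideal A is isomorphic to T/J(T), which is singular, hence injective, hence a direct summand of T, contradicting indecomposability.) -/

import Mathlib

universe u

/-- A module `M` is singular if every element is annihilated by an essential ideal. -/
def IsSingularModule (T : Type u) [CommRing T] (M : Type u) [AddCommGroup M]
    [Module T M] : Prop :=
  ∀ x : M, ∃ I : Ideal T, (∀ J : Ideal T, J ⊓ I = ⊥ → J = ⊥) ∧ ∀ r ∈ I, r • x = 0

/-- In a commutative Artinian ring with no nontrivial idempotents, every element is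
nilpotent or a unit. -/
lemma nilpotent_or_unit_of_artinian (T : Type u) [CommRing T] [IsArtinianRing T]
    (hindec : ∀ e : T, IsIdempotentElem e → e = 0 ∨ e = 1) (r : T) :
    IsNilpotent r ∨ IsUnit r := by
  obtain ⟨n, y, hy⟩ := IsArtinian.exists_pow_succ_smul_dvd r (1 : T)
  simp only [smul_eq_mul, mul_one, Nat.succ_eq_add_one] at hy
  have key : ∀ k : ℕ, r ^ n * (r * y) ^ k = r ^ n := by
    intro k
    induction k with
    | zero => simp
    | succ k ih =>
      have h1 : r ^ n * (r * y) = r ^ n := by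
        calc r ^ n * (r * y) = r ^ (n + 1) * y := by ring
          _ = r ^ n := hy
      calc r ^ n * (r * y) ^ (k + 1) = (r ^ n * (r * y)) * (r * y) ^ k := by ring
        _ = r ^ n * (r * y) ^ k := by rw [h1]
        _ = r ^ n := ih
  have he2 : IsIdempotentElem ((r * y) ^ n) := by
    unfold IsIdempotentElem
    calc (r * y) ^ n * (r * y) ^ n = (r ^ n * (r * y) ^ n) * y ^ n := by
          rw [mul_pow]; ring
      _ = r ^ n * y ^ n := by rw [key n]
      _ = (r * y) ^ n := by rw [mul_pow]
  rcases hindec _ he2 with h0 | h1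
  · left
    exact ⟨n, by rw [← key n, h0, mul_zero]⟩
  · right
    refine IsUnit.of_mul_eq_one (a := r) (r ^ n * y ^ (n + 1)) ?_
    calc r * (r ^ n * y ^ (n + 1)) = (r ^ (n + 1) * y) * y ^ n := by ring
      _ = r ^ n * y ^ n := by rw [hy]
      _ = (r * y) ^ n := by rw [mul_pow]
      _ = 1 := h1

/-- A commutative indecomposable Artinian ring that is SI (every singular module is
injective) is a field. -/
theorem stmt_18 (T : Type u) [CommRing T] [Nontrivial T] [IsArtinianRing T]
    (hindec : ∀ e : T, IsIdempotentElem e → e = 0 ∨ e = 1)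
    (hSI : ∀ (M : Type u) [AddCommGroup M] [Module T M], IsSingularModule T M →
      Module.Injective T M) :
    IsField T := by
  have hnu : ∀ r : T, IsNilpotent r ∨ IsUnit r :=
    fun r => nilpotent_or_unit_of_artinian T hindec r
  -- Key claim: T is reduced.
  have hred : ∀ a : T, IsNilpotent a → a = 0 := by
    by_contra hcon
    push_neg at hcon
    obtain ⟨z, hznil, hzne⟩ := hcon
    set N : Ideal T := nilradical T with hNdef
    have hN : N ≠ ⊥ := by
      intro h
      have hzN : z ∈ N := mem_nilradical.2 hznil
      rw [h] at hzN
      exact hzne ((Submodule.mem_bot T).1 hzN)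
    -- N is essential
    have hess : ∀ K : Ideal T, K ⊓ N = ⊥ → K = ⊥ := by
      intro K hK
      by_contra hK0
      obtain ⟨y, hyK, hy0⟩ := Submodule.exists_mem_ne_zero_of_ne_bot hK0
      rcases hnu y with hnil | hunit
      · have : y ∈ K ⊓ N := ⟨hyK, mem_nilradical.2 hnil⟩
        rw [hK] at this
        exact hy0 this
      · have hKtop : K = ⊤ := Ideal.eq_top_of_isUnit_mem K hyK hunit
        rw [hKtop, top_inf_eq] at hK
        exact hN hK
    -- choose a minimal nonzero ideal A
    obtain ⟨A, hA, hmin⟩ :=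
      IsArtinian.set_has_minimal {I : Ideal T | I ≠ ⊥} ⟨N, hN⟩
    -- every element of N annihilates A
    have hann : ∀ a ∈ A, ∀ t, t ∈ N → t * a = 0 := by
      intro a ha t ht
      by_contra hta
      have hmem : t * a ∈ A := Ideal.mul_mem_left A t ha
      have h1 : Ideal.span {t * a} ≤ A := (Ideal.span_singleton_le_iff_mem A).2 hmem
      have h2 : Ideal.span {t * a} ≠ (⊥ : Ideal T) := by
        simpa [Ideal.span_singleton_eq_bot] using hta
      have h3 : Ideal.span {t * a} = A := by
        by_contra hne
        exact hmin _ h2 (lt_of_le_of_ne h1 hne)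
      have haA : a ∈ Ideal.span {t * a} := h3 ▸ ha
      obtain ⟨s, hs⟩ := Ideal.mem_span_singleton'.1 haA
      have hst : IsNilpotent (s * t) :=
        (Commute.all s t).isNilpotent_mul_left (mem_nilradical.1 ht)
      have hu : IsUnit (1 - s * t) := hst.isUnit_one_sub
      have hz : (1 - s * t) * a = 0 := by
        calc (1 - s * t) * a = a - s * (t * a) := by ring
          _ = 0 := by rw [hs, sub_self]
      have ha0 : a = 0 := (IsUnit.mul_right_eq_zero hu).1 hz
      exact hta (by rw [ha0, mul_zero])
    -- A (as a module) is singular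
    have hsing : IsSingularModule T ↥A := by
      intro x
      refine ⟨N, hess, fun r hr => ?_⟩
      have : r * (x : T) = 0 := hann (x : T) x.2 r hr
      exact Subtype.ext (by simpa [smul_eq_mul] using this)
    have hinj : Module.Injective T ↥A := hSI ↥A hsing
    -- extend the identity A → A along A ↪ T
    obtain ⟨h, hh⟩ := hinj.out A.subtype (Submodule.injective_subtype A)
      (LinearMap.id : ↥A →ₗ[T] ↥A)
    set e : T := (h 1 : T) with hedef
    have heA : e ∈ A := (h 1).2
    have hme : ∀ a ∈ A, a * e = a := by
      intro a ha
      have h1 : h ((⟨a, ha⟩ : ↥A) : T) = ⟨a, ha⟩ := hh ⟨a, ha⟩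
      have h2 : h a = a • h 1 := by
        simpa using map_smul h a (1 : T)
      have h3 : a • h 1 = (⟨a, ha⟩ : ↥A) := by rw [← h2]; exact h1
      have := congrArg (Subtype.val) h3
      simpa [smul_eq_mul] using this
    have hid : IsIdempotentElem e := hme e heA
    rcases hindec e hid with h0 | h1
    · obtain ⟨x, hxA, hx0⟩ := Submodule.exists_mem_ne_zero_of_ne_bot hA
      exact hx0 (by rw [← hme x hxA, h0, mul_zero])
    · have h1A : (1 : T) ∈ A := h1 ▸ heA
      have hAtop : A = ⊤ := Ideal.eq_top_of_isUnit_mem A h1A isUnit_one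
      have hNtop : N ≠ ⊤ := by
        intro h
        have h1N : (1 : T) ∈ N := by rw [h]; trivial
        obtain ⟨k, hk⟩ := mem_nilradical.1 h1N
        simp at hk
      exact hmin N hN (hAtop ▸ lt_top_iff_ne_top.2 hNtop)
  -- conclude
  refine ⟨exists_pair_ne T, mul_comm, ?_⟩
  intro a ha
  rcases hnu a with hnil | hunit
  · exact absurd (hred a hnil) ha
  · obtain ⟨u, hu⟩ := hunit
    exact ⟨(u⁻¹ : Tˣ), by rw [← hu]; exact u.mul_inv⟩
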